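/- Let Y be an alphabet indexed by ℕ and E an alphabet indexed by a commutative monoid (I,×), and let A = Y×E with letters (y_i, e_l). The duffle product, defined by (y_i,e_l)u ⧈ (y_j,e_k)v = (y_i,e_l)(u ⧈ (y_j,e_k)v) + (y_j,e_k)((y_i,e_l)u ⧈ v) + (y_{i+j}, e_{l×k})(u ⧈ v) with the empty word as unit, lies in 𝒫 with bracket [(y_i,e_l),(y_j,e_k)] = (y_{i+j}, e_{l×k}); in particular it is commutative and associative. -/

import Mathlib

open Finsupp Finset Filter

/-- A word `w` seen as an element of the free module `A⟨X⟩` (coefficient 1). -/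
noncomputable def delta (A : Type*) [CommRing A] {X : Type*} (w : List X) : List X →₀ A :=
  Finsupp.single w 1

/-- Left concatenation by a letter, as a linear map on `A⟨X⟩`. -/
noncomputable def lcons (A : Type*) [CommRing A] {X : Type*} (x : X) :
    (List X →₀ A) →ₗ[A] (List X →₀ A) :=
  Finsupp.lmapDomain A A (List.cons x)

section Aux

variable {A I : Type*} [CommRing A] [CommMonoid I]
    (star : (List (ℕ × I) →₀ A) →ₗ[A] (List (ℕ × I) →₀ A) →ₗ[A] (List (ℕ × I) →₀ A))

lemma lcons_delta (a : ℕ × I) (u : List (ℕ × I)) :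
    lcons A a (delta A u) = delta A (a :: u) := by
  simp [lcons, delta, Finsupp.lmapDomain, Finsupp.mapDomain_single]

lemma single_eq_smul_delta (u : List (ℕ × I)) (c : A) :
    (Finsupp.single u c : List (ℕ × I) →₀ A) = c • delta A u := by
  simp [delta, Finsupp.smul_single]

/-- Generalized left unit. -/
lemma gunitl (hunitl : ∀ w : List (ℕ × I), star (delta A []) (delta A w) = delta A w)
    (P : List (ℕ × I) →₀ A) : star (delta A []) P = P := by
  induction P using Finsupp.induction_linear with
  | zero => simp
  | add f g hf hg => simp [hf, hg]
  | single u c => rw [single_eq_smul_delta, map_smul, hunitl]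

/-- Generalized right unit. -/
lemma gunitr (hunitr : ∀ w : List (ℕ × I), star (delta A w) (delta A []) = delta A w)
    (P : List (ℕ × I) →₀ A) : star P (delta A []) = P := by
  induction P using Finsupp.induction_linear with
  | zero => simp
  | add f g hf hg => simp [hf, hg]
  | single u c =>
      rw [single_eq_smul_delta, map_smul, LinearMap.smul_apply, hunitr]

variable (hrec : ∀ (a b : (ℕ × I)) (u v : List (ℕ × I)),
      star (delta A (a :: u)) (delta A (b :: v)) =
        lcons A a (star (delta A u) (delta A (b :: v)))
          + lcons A b (star (delta A (a :: u)) (delta A v))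
          + lcons A (a.1 + b.1, a.2 * b.2) (star (delta A u) (delta A v)))

include hrec in
include hrec in
include hrec in
include hrec in
/-- Recursion generalized in the left argument. -/
lemma starR (a b : ℕ × I) (P : List (ℕ × I) →₀ A) (v : List (ℕ × I)) :
    star (lcons A a P) (delta A (b :: v)) =
      lcons A a (star P (delta A (b :: v))) + lcons A b (star (lcons A a P) (delta A v))
        + lcons A (a.1 + b.1, a.2 * b.2) (star P (delta A v)) := by
  induction P using Finsupp.induction_linear with
  | zero => simp
  | add f g hf hg =>
      simp only [map_add, LinearMap.add_apply, hf, hg]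
      abel
  | single u c =>
      rw [single_eq_smul_delta]
      simp only [map_smul, LinearMap.smul_apply, lcons_delta, hrec a b u v, ← smul_add]

include hrec in
include hrec in
include hrec in
include hrec in
/-- Recursion generalized in the right argument. -/
lemma starR' (a b : ℕ × I) (u : List (ℕ × I)) (Q : List (ℕ × I) →₀ A) :
    star (delta A (a :: u)) (lcons A b Q) =
      lcons A a (star (delta A u) (lcons A b Q)) + lcons A b (star (delta A (a :: u)) Q)
        + lcons A (a.1 + b.1, a.2 * b.2) (star (delta A u) Q) := by
  induction Q using Finsupp.induction_linear with
  | zero => simp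
  | add f g hf hg =>
      simp only [map_add, hf, hg]
      abel
  | single v c =>
      rw [single_eq_smul_delta]
      simp only [map_smul, lcons_delta, hrec a b u v, ← smul_add]

include hrec in
include hrec in
include hrec in
include hrec in
/-- Commutativity by induction on the total length. -/
lemma starComm (hunitl : ∀ w : List (ℕ × I), star (delta A []) (delta A w) = delta A w)
    (hunitr : ∀ w : List (ℕ × I), star (delta A w) (delta A []) = delta A w) :
    ∀ n (u v : List (ℕ × I)), u.length + v.length = n →
      star (delta A u) (delta A v) = star (delta A v) (delta A u) := by
  intro n
  induction n using Nat.strong_induction_on with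
  | _ n ih =>
    intro u v hn
    match u, v with
    | [], v => rw [hunitl, hunitr]
    | a :: u, [] => rw [hunitl, hunitr]
    | a :: u, b :: v =>
      rw [hrec a b u v, hrec b a v u]
      rw [ih (u.length + (b :: v).length) (by simp at hn ⊢; omega) u (b :: v) rfl,
        ih ((a :: u).length + v.length) (by simp at hn ⊢; omega) (a :: u) v rfl,
        ih (u.length + v.length) (by simp at hn ⊢; omega) u v rfl]
      have : (a.1 + b.1, a.2 * b.2) = (b.1 + a.1, b.2 * a.2) := by
        rw [add_comm, mul_comm]
      rw [this]
      abel

include hrec in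
include hrec in
include hrec in
include hrec in
/-- Associativity by induction on the total length. -/
lemma starAssoc (hunitl : ∀ w : List (ℕ × I), star (delta A []) (delta A w) = delta A w)
    (hunitr : ∀ w : List (ℕ × I), star (delta A w) (delta A []) = delta A w) :
    ∀ n (u v w : List (ℕ × I)), u.length + v.length + w.length = n →
      star (star (delta A u) (delta A v)) (delta A w)
        = star (delta A u) (star (delta A v) (delta A w)) := by
  intro n
  induction n using Nat.strong_induction_on with
  | _ n ih =>
    intro u v w hn
    match u, v, w with
    | [], v, w => rw [hunitl, gunitl star hunitl]
    | a :: u, [], w => rw [hunitr, hunitl]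
    | a :: u, b :: v, [] => rw [gunitr star hunitr, gunitr star hunitr]
    | a :: u, b :: v, c :: w =>
      have lu : u.length + (b :: v).length + (c :: w).length < n := by
        simp at hn ⊢; omega
      have lv : (a :: u).length + v.length + (c :: w).length < n := by
        simp at hn ⊢; omega
      have lw : (a :: u).length + (b :: v).length + w.length < n := by
        simp at hn ⊢; omega
      have luv : u.length + v.length + (c :: w).length < n := by
        simp at hn ⊢; omega
      have luw : u.length + (b :: v).length + w.length < n := by
        simp at hn ⊢; omega
      have lvw : (a :: u).length + v.length + w.length < n := by
        simp at hn ⊢; omega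
      have luvw : u.length + v.length + w.length < n := by
        simp at hn ⊢; omega
      -- expand LHS
      rw [hrec a b u v]
      simp only [map_add, LinearMap.add_apply]
      rw [starR star hrec a c _ w, starR star hrec b c _ w,
        starR star hrec (a.1 + b.1, a.2 * b.2) c _ w]
      -- combine the three `lcons c` terms
      have hc : lcons A c (star (lcons A a (star (delta A u) (delta A (b :: v)))) (delta A w))
          + lcons A c (star (lcons A b (star (delta A (a :: u)) (delta A v))) (delta A w))
          + lcons A c (star (lcons A (a.1 + b.1, a.2 * b.2) (star (delta A u) (delta A v)))
              (delta A w))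
          = lcons A c (star (star (delta A (a :: u)) (delta A (b :: v))) (delta A w)) := by
        rw [hrec a b u v]
        simp only [map_add, LinearMap.add_apply]
      -- expand RHS
      rw [hrec b c v w]
      simp only [map_add]
      rw [starR' star hrec a b u _, starR' star hrec a c u _,
        starR' star hrec a (b.1 + c.1, b.2 * c.2) u _]
      -- combine the three `lcons a` terms on RHS
      have ha : lcons A a (star (delta A u) (lcons A b (star (delta A v) (delta A (c :: w)))))
          + lcons A a (star (delta A u) (lcons A c (star (delta A (b :: v)) (delta A w))))
          + lcons A a (star (delta A u) (lcons A (b.1 + c.1, b.2 * c.2)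
              (star (delta A v) (delta A w))))
          = lcons A a (star (delta A u) (star (delta A (b :: v)) (delta A (c :: w)))) := by
        rw [hrec b c v w]
        simp only [map_add]
      -- rewrite using induction hypotheses
      have e1 := hc
      rw [ih _ lw (a :: u) (b :: v) w rfl] at e1
      rw [ih _ lu u (b :: v) (c :: w) rfl, ih _ lv (a :: u) v (c :: w) rfl,
        ih _ luv u v (c :: w) rfl, ih _ luw u (b :: v) w rfl,
        ih _ lvw (a :: u) v w rfl, ih _ luvw u v w rfl]
      have hb : (a.1 + (b.1 + c.1, b.2 * c.2).1, a.2 * (b.1 + c.1, b.2 * c.2).2)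
          = (a.1 + b.1 + c.1, a.2 * b.2 * c.2) := by
        simp [add_assoc, mul_assoc]
      rw [hb, ← e1, ← ha]
      abel

end Aux

/-- the duffle product on the alphabet `Y × E` indexed by `ℕ × I`, with bracket
`[(y_i,e_l),(y_j,e_k)] = (y_(i+j), e_(l×k))`, lies in `𝒫`; in particular it is commutative
and associative. -/
theorem stmt6 {A I : Type*} [CommRing A] [CommMonoid I]
    (star : (List (ℕ × I) →₀ A) →ₗ[A] (List (ℕ × I) →₀ A) →ₗ[A] (List (ℕ × I) →₀ A))
    (hunitl : ∀ w : List (ℕ × I), star (delta A []) (delta A w) = delta A w)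
    (hunitr : ∀ w : List (ℕ × I), star (delta A w) (delta A []) = delta A w)
    (hrec : ∀ (a b : (ℕ × I)) (u v : List (ℕ × I)),
      star (delta A (a :: u)) (delta A (b :: v)) =
        lcons A a (star (delta A u) (delta A (b :: v)))
          + lcons A b (star (delta A (a :: u)) (delta A v))
          + lcons A (a.1 + b.1, a.2 * b.2) (star (delta A u) (delta A v))) :
    (∀ w₁ w₂ : List (ℕ × I), star (delta A w₁) (delta A w₂) = star (delta A w₂) (delta A w₁)) ∧
    (∀ w₁ w₂ w₃ : List (ℕ × I),
        star (star (delta A w₁) (delta A w₂)) (delta A w₃)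
          = star (delta A w₁) (star (delta A w₂) (delta A w₃))) := by
  refine ⟨fun w₁ w₂ => starComm star hrec hunitl hunitr _ w₁ w₂ rfl,
    fun w₁ w₂ w₃ => starAssoc star hrec hunitl hunitr _ w₁ w₂ w₃ rfl⟩
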